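/- There exist constants c, C > 0 such that for every sign μ ∈ {+1, −1} and all ξ, η ∈ ℝ² with 0 < |ξ| ≤ 2^{−10} |η| (the low–high interaction with μν = +1, i.e., ν = μ): c Λ(|η|) ≤ |Φ^{μ,μ}(ξ, η)| ≤ C Λ(|η|); that is, in this regime |Φ^{μ,μ}(ξ, η)| is comparable to max{Λ(|ξ|), Λ(|η|)} = Λ(|η|). -/

import Mathlib

noncomputable section

abbrev E2 : Type := EuclideanSpace ℝ (Fin 2)

/-- Euclidean dot product on ℝ². -/
def dotE (x y : E2) : ℝ := ∑ i : Fin 2, x i * y i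

/-- `Λ(r) = r^{3/2} (tanh r)^{1/2}`. -/
def Lam (r : ℝ) : ℝ := r ^ ((3 : ℝ) / 2) * Real.sqrt (Real.tanh r)

/-- `λ(x) = Λ(√x)`. -/
def lam (x : ℝ) : ℝ := Lam (Real.sqrt x)

/-- The phase `Φ^{μ,ν}(ξ,η) = Λ(|ξ|) − μ Λ(|ξ−η|) − ν Λ(|η|)`. -/
def Phi (μ ν : ℝ) (ξ η : E2) : ℝ := Lam ‖ξ‖ - μ * Lam ‖ξ - η‖ - ν * Lam ‖η‖

lemma tanh_mono {a b : ℝ} (h : a ≤ b) : Real.tanh a ≤ Real.tanh b := by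
  rw [Real.tanh_eq_sinh_div_cosh, Real.tanh_eq_sinh_div_cosh,
    div_le_div_iff₀ (Real.cosh_pos a) (Real.cosh_pos b)]
  have h1 : 0 ≤ Real.sinh (b - a) := Real.sinh_nonneg_iff.2 (by linarith)
  rw [Real.sinh_sub] at h1
  nlinarith [Real.cosh_pos a, Real.cosh_pos b]

lemma tanh_two_mul_le {r : ℝ} (h : 0 ≤ r) : Real.tanh (2 * r) ≤ 2 * Real.tanh r := by
  rw [Real.tanh_eq_sinh_div_cosh, Real.tanh_eq_sinh_div_cosh, mul_div_assoc',
    div_le_div_iff₀ (Real.cosh_pos _) (Real.cosh_pos _), Real.sinh_two_mul,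
    Real.cosh_two_mul]
  have hs : 0 ≤ Real.sinh r := Real.sinh_nonneg_iff.2 h
  nlinarith [Real.cosh_pos r]

lemma Lam_nonneg {r : ℝ} (h : 0 ≤ r) : 0 ≤ Lam r :=
  mul_nonneg (Real.rpow_nonneg h _) (Real.sqrt_nonneg _)

lemma Lam_pos {r : ℝ} (h : 0 < r) : 0 < Lam r := by
  have ht : 0 < Real.tanh r := by
    rw [Real.tanh_eq_sinh_div_cosh]
    exact div_pos (Real.sinh_pos_iff.2 h) (Real.cosh_pos r)
  exact mul_pos (Real.rpow_pos_of_pos h _) (Real.sqrt_pos.2 ht)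

lemma Lam_mono {a b : ℝ} (ha : 0 ≤ a) (h : a ≤ b) : Lam a ≤ Lam b :=
  mul_le_mul (Real.rpow_le_rpow ha h (by norm_num)) (Real.sqrt_le_sqrt (tanh_mono h))
    (Real.sqrt_nonneg _) (Real.rpow_nonneg (le_trans ha h) _)

lemma Lam_scale {a r : ℝ} (ha : 0 ≤ a) (ha1 : a ≤ 1) (hr : 0 ≤ r) :
    Lam (a * r) ≤ a ^ ((3 : ℝ) / 2) * Lam r := by
  unfold Lam
  rw [Real.mul_rpow ha hr]
  have h1 : Real.sqrt (Real.tanh (a * r)) ≤ Real.sqrt (Real.tanh r) :=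
    Real.sqrt_le_sqrt (tanh_mono (by nlinarith))
  have h2 : 0 ≤ a ^ ((3:ℝ)/2) * r ^ ((3:ℝ)/2) :=
    mul_nonneg (Real.rpow_nonneg ha _) (Real.rpow_nonneg hr _)
  calc a ^ ((3:ℝ)/2) * r ^ ((3:ℝ)/2) * Real.sqrt (Real.tanh (a * r))
      ≤ a ^ ((3:ℝ)/2) * r ^ ((3:ℝ)/2) * Real.sqrt (Real.tanh r) :=
        mul_le_mul_of_nonneg_left h1 h2
    _ = a ^ ((3:ℝ)/2) * (r ^ ((3:ℝ)/2) * Real.sqrt (Real.tanh r)) := by ring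

lemma Lam_two_mul {r : ℝ} (hr : 0 ≤ r) : Lam (2 * r) ≤ 4 * Lam r := by
  unfold Lam
  rw [Real.mul_rpow (by norm_num) hr]
  have h1 : Real.sqrt (Real.tanh (2 * r)) ≤ Real.sqrt 2 * Real.sqrt (Real.tanh r) := by
    rw [← Real.sqrt_mul (by norm_num)]
    exact Real.sqrt_le_sqrt (tanh_two_mul_le hr)
  have h2 : (2:ℝ) ^ ((3:ℝ)/2) * Real.sqrt 2 = 4 := by
    rw [show Real.sqrt 2 = (2:ℝ) ^ ((1:ℝ)/2) from Real.sqrt_eq_rpow 2,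
      ← Real.rpow_add (by norm_num), show (3:ℝ)/2 + 1/2 = 2 by norm_num]
    rw [show ((2:ℝ):ℝ) = ((2:ℕ):ℝ) by norm_num, Real.rpow_natCast]
    norm_num
  calc (2:ℝ) ^ ((3:ℝ)/2) * r ^ ((3:ℝ)/2) * Real.sqrt (Real.tanh (2*r))
      ≤ (2:ℝ) ^ ((3:ℝ)/2) * r ^ ((3:ℝ)/2) * (Real.sqrt 2 * Real.sqrt (Real.tanh r)) := by
        have h3 : 0 ≤ (2:ℝ) ^ ((3:ℝ)/2) * r ^ ((3:ℝ)/2) :=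
          mul_nonneg (Real.rpow_nonneg (by norm_num) _) (Real.rpow_nonneg hr _)
        exact mul_le_mul_of_nonneg_left h1 h3
    _ = ((2:ℝ) ^ ((3:ℝ)/2) * Real.sqrt 2) * (r ^ ((3:ℝ)/2) * Real.sqrt (Real.tanh r)) := by ring
    _ = 4 * (r ^ ((3:ℝ)/2) * Real.sqrt (Real.tanh r)) := by rw [h2]

theorem stmt18 :
    ∃ c C : ℝ, 0 < c ∧ 0 < C ∧
      ∀ μ : ℝ, (μ = 1 ∨ μ = -1) →
        ∀ ξ η : E2, 0 < ‖ξ‖ → ‖ξ‖ ≤ (2 : ℝ) ^ (-10 : ℤ) * ‖η‖ →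
          c * Lam ‖η‖ ≤ |Phi μ μ ξ η| ∧ |Phi μ μ ξ η| ≤ C * Lam ‖η‖ := by
  refine ⟨1/2, 6, by norm_num, by norm_num, ?_⟩
  rintro μ hμ ξ η hξ hle
  have ha : (0:ℝ) < (2:ℝ)^(-10:ℤ) := by positivity
  have hr : 0 < ‖η‖ := by
    rcases le_or_gt ‖η‖ 0 with h | h
    · nlinarith
    · exact h
  set s := ‖ξ‖ with hs_def
  set r := ‖η‖ with hr_def
  set t := ‖ξ - η‖ with ht_def
  -- Λ(s) ≤ (1/2) Λ(r)
  have hL : 0 ≤ Lam r := Lam_nonneg hr.le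
  have hsr : Lam s ≤ (1/2) * Lam r := by
    have h1 : Lam s ≤ Lam ((2:ℝ)^(-10:ℤ) * r) := Lam_mono (norm_nonneg _) hle
    have h2 : Lam ((2:ℝ)^(-10:ℤ) * r) ≤ ((2:ℝ)^(-10:ℤ)) ^ ((3:ℝ)/2) * Lam r :=
      Lam_scale ha.le (by norm_num) hr.le
    have h3 : ((2:ℝ)^(-10:ℤ)) ^ ((3:ℝ)/2) ≤ 1/2 := by
      have h4 : ((2:ℝ)^(-10:ℤ)) ^ ((3:ℝ)/2) ≤ ((2:ℝ)^(-10:ℤ)) ^ ((1:ℝ)) :=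
        Real.rpow_le_rpow_of_exponent_ge ha (by norm_num) (by norm_num)
      rw [Real.rpow_one] at h4
      linarith [h4, show ((2:ℝ)^(-10:ℤ)) ≤ 1/2 by norm_num]
    exact le_trans h1 (le_trans h2 (mul_le_mul_of_nonneg_right h3 hL))
  -- Λ(t) ≤ 4 Λ(r)
  have htr : Lam t ≤ 4 * Lam r := by
    have h1 : t ≤ 2 * r := by
      have h2 := norm_sub_le ξ η
      have h3 : ((2:ℝ)^(-10:ℤ)) * r ≤ r := by nlinarith [show ((2:ℝ)^(-10:ℤ)) ≤ 1 by norm_num]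
      calc t ≤ s + r := h2
        _ ≤ 2 * r := by linarith
    exact le_trans (Lam_mono (norm_nonneg _) h1) (Lam_two_mul hr.le)
  have hLs : 0 ≤ Lam s := Lam_nonneg (norm_nonneg _)
  have hLt : 0 ≤ Lam t := Lam_nonneg (norm_nonneg _)
  have hLr : 0 < Lam r := Lam_pos hr
  rcases hμ with h | h
  · subst h
    have hPhi : Phi 1 1 ξ η = Lam s - Lam t - Lam r := by simp [Phi]; rfl
    rw [hPhi]
    constructor
    · calc (1/2) * Lam r ≤ -(Lam s - Lam t - Lam r) := by linarith
        _ ≤ |Lam s - Lam t - Lam r| := neg_le_abs _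
    · rw [abs_le]; constructor <;> linarith
  · subst h
    have hPhi : Phi (-1) (-1) ξ η = Lam s + Lam t + Lam r := by unfold Phi; ring
    rw [hPhi, abs_of_nonneg (by linarith)]
    constructor <;> linarith

end
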